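/- Let (L₀, L₁, L₂, L_∞) be a quadruple of pairwise transverse Lagrangians in a symplectic vector space V. Then for every ℓ₀ ∈ L₀, with ℓ_∞ ∈ L_∞ defined by ℓ₀ + ℓ_∞ ∈ L₁, one has Q_{L₂}^{L₀,L_∞}(ℓ₀) − Q_{L₁}^{L₀,L_∞}(ℓ₀) = Q_{L₂}^{L₁,L_∞}(ℓ₀ + ℓ_∞). -/
import Mathlib


/-- A Lagrangian of a symplectic vector space `(V, ω)` of dimension `2n` is an
`n`-dimensional subspace on which `ω` vanishes. -/
def IsLagrangian {V : Type*} [AddCommGroup V] [Module ℝ V]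
    (ω : V →ₗ[ℝ] V →ₗ[ℝ] ℝ) (n : ℕ) (L : Submodule ℝ V) : Prop :=
  Module.finrank ℝ L = n ∧ ∀ x ∈ L, ∀ y ∈ L, ω x y = 0

/-- Let `(L₀, L₁, L₂, L_∞)` be a quadruple of pairwise transverse Lagrangians,
with graph maps `T₁, T₂ : L₀ → L_∞` determined by `L₁, L₂` (w.r.t. the
decomposition `V = L₀ ⊕ L_∞`) and `S : L₁ → L_∞` determined by `L₂`
(w.r.t. `V = L₁ ⊕ L_∞`).  Then for every `ℓ₀ ∈ L₀`, with `ℓ_∞ = T₁(ℓ₀)` (so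
that `ℓ₀ + ℓ_∞ ∈ L₁`), one has
`Q_{L₂}^{L₀,L_∞}(ℓ₀) − Q_{L₁}^{L₀,L_∞}(ℓ₀) = Q_{L₂}^{L₁,L_∞}(ℓ₀ + ℓ_∞)`. -/
theorem stmt_11
    {V : Type*} [AddCommGroup V] [Module ℝ V] [FiniteDimensional ℝ V]
    (n : ℕ)
    (ω : V →ₗ[ℝ] V →ₗ[ℝ] ℝ)
    (halt : ∀ x : V, ω x x = 0)
    (hnd : ∀ x : V, x ≠ 0 → ∃ y : V, ω x y ≠ 0)
    (hdim : Module.finrank ℝ V = 2 * n)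
    (L₀ L₁ L₂ Linf : Submodule ℝ V)
    (hL₀ : IsLagrangian ω n L₀) (hL₁ : IsLagrangian ω n L₁)
    (hL₂ : IsLagrangian ω n L₂) (hLinf : IsLagrangian ω n Linf)
    (h01 : L₀ ⊓ L₁ = ⊥) (h02 : L₀ ⊓ L₂ = ⊥) (h0inf : L₀ ⊓ Linf = ⊥)
    (h12 : L₁ ⊓ L₂ = ⊥) (h1inf : L₁ ⊓ Linf = ⊥) (h2inf : L₂ ⊓ Linf = ⊥)
    (T₁ : ↥L₀ →ₗ[ℝ] ↥Linf)
    (hT₁ : ∀ x : V, x ∈ L₁ ↔ ∃ a : ↥L₀, x = ↑a + ↑(T₁ a))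
    (T₂ : ↥L₀ →ₗ[ℝ] ↥Linf)
    (hT₂ : ∀ x : V, x ∈ L₂ ↔ ∃ a : ↥L₀, x = ↑a + ↑(T₂ a))
    (S : ↥L₁ →ₗ[ℝ] ↥Linf)
    (hS : ∀ x : V, x ∈ L₂ ↔ ∃ b : ↥L₁, x = ↑b + ↑(S b)) :
    ∀ (a : ↥L₀) (b : ↥L₁), (↑b : V) = ↑a + ↑(T₁ a) →
      ω ↑a ↑(T₂ a) - ω ↑a ↑(T₁ a) = ω ↑b ↑(S b) := by
  intro a b hb
  -- b + S b ∈ L₂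
  have hmem : ((b : V) + (S b : V)) ∈ L₂ := (hS _).2 ⟨b, rfl⟩
  obtain ⟨a', ha'⟩ := (hT₂ _).1 hmem
  -- a - a' ∈ L₀ ⊓ Linf = ⊥
  have hkey : ((a : V) - a') = ((T₂ a' : V) - T₁ a - S b) := by
    rw [hb] at ha'; linear_combination (norm := abel) ha'
  have hzero : ((a : V) - a') = 0 := by
    have h1 : ((a : V) - a') ∈ L₀ := sub_mem a.2 a'.2
    have h2 : ((a : V) - a') ∈ Linf := by
      rw [hkey]; exact sub_mem (sub_mem (T₂ a').2 (T₁ a).2) (S b).2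
    have : ((a : V) - a') ∈ L₀ ⊓ Linf := ⟨h1, h2⟩
    rwa [h0inf, Submodule.mem_bot] at this
  have haa' : a' = a := Subtype.ext (sub_eq_zero.mp hzero).symm
  rw [haa'] at hkey
  rw [sub_self] at hkey
  have hSb : (S b : V) = (T₂ a : V) - T₁ a := by
    linear_combination (norm := abel) hkey
  have hLinf2 := hLinf.2
  rw [hb, hSb]
  have e1 : ω (T₁ a) (T₂ a) = 0 := hLinf2 _ (T₁ a).2 _ (T₂ a).2
  have e2 : ω (T₁ a) (T₁ a) = 0 := hLinf2 _ (T₁ a).2 _ (T₁ a).2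
  simp only [map_add, map_sub, LinearMap.add_apply, LinearMap.sub_apply]
  rw [e1, e2]; ring
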